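/- For positive reals α, v and real η with α < η²/v, every r in [0, (η² − αv)/v²) satisfies g(r) > g((η² − αv)/v²); in particular r = 0 is not a minimizer of g on [0, ∞). -/
import Mathlib


/-- If `α·v < η²`, then with `c = (η² − αv)/v²`, every `r ∈ [0, c)` satisfies
`g(r) > g(c)`; in particular `r = 0` is not a minimizer of `g` on `[0, ∞)`. -/
theorem stmt_3 (α v η : ℝ) (hα : 0 < α) (hv : 0 < v) (h : α * v < η ^ 2) :
    (∀ r ∈ Set.Ico (0 : ℝ) ((η ^ 2 - α * v) / v ^ 2),
      (fun r : ℝ => α * Real.log (v * r + α) - η ^ 2 * r / (v * r + α)) r >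
      (fun r : ℝ => α * Real.log (v * r + α) - η ^ 2 * r / (v * r + α))
        ((η ^ 2 - α * v) / v ^ 2)) ∧
    ¬ IsMinOn (fun r : ℝ => α * Real.log (v * r + α) - η ^ 2 * r / (v * r + α))
      (Set.Ici 0) 0 := by
  set g : ℝ → ℝ := fun r : ℝ => α * Real.log (v * r + α) - η ^ 2 * r / (v * r + α)
    with hg
  set c : ℝ := (η ^ 2 - α * v) / v ^ 2 with hc
  have hcpos : 0 < c := div_pos (by linarith) (by positivity)
  have hpos : ∀ r : ℝ, 0 ≤ r → 0 < v * r + α := fun r hr => by nlinarith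
  -- derivative
  have hderiv : ∀ r : ℝ, 0 ≤ r → HasDerivAt g
      (α * (v / (v * r + α)) -
        (η ^ 2 * (v * r + α) - η ^ 2 * r * v) / (v * r + α) ^ 2) r := by
    intro r hr
    have hne : v * r + α ≠ 0 := ne_of_gt (hpos r hr)
    have h1 : HasDerivAt (fun r : ℝ => v * r + α) v r := by
      simpa using ((hasDerivAt_id r).const_mul v).add_const α
    have h2 : HasDerivAt (fun r : ℝ => η ^ 2 * r) (η ^ 2) r := by
      simpa using (hasDerivAt_id r).const_mul (η ^ 2)
    exact ((h1.log hne).const_mul α).sub (h2.div h1 hne)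
  have hanti : StrictAntiOn g (Set.Icc 0 c) := by
    apply strictAntiOn_of_deriv_neg (convex_Icc 0 c)
    · apply ContinuousOn.sub
      · apply ContinuousOn.mul continuousOn_const
        apply ContinuousOn.log (by fun_prop)
        intro x hx
        exact ne_of_gt (hpos x hx.1)
      · apply ContinuousOn.div (by fun_prop) (by fun_prop)
        intro x hx
        exact ne_of_gt (hpos x hx.1)
    · intro x hx
      rw [interior_Icc] at hx
      have hx0 : 0 ≤ x := le_of_lt hx.1
      have hp := hpos x hx0
      rw [(hderiv x hx0).deriv]
      have hxc : x < c := hx.2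
      have key : v * (v * x + α) - η ^ 2 < 0 := by
        have : v ^ 2 * x < η ^ 2 - α * v := by
          have := (lt_div_iff₀ (by positivity : (0:ℝ) < v ^ 2)).mp hxc
          linarith [mul_comm (v ^ 2) x]
        nlinarith
      have : α * (v / (v * x + α)) -
          (η ^ 2 * (v * x + α) - η ^ 2 * x * v) / (v * x + α) ^ 2
          = α * (v * (v * x + α) - η ^ 2) / (v * x + α) ^ 2 := by
        field_simp
        ring
      rw [this]
      apply div_neg_of_neg_of_pos _ (by positivity)
      nlinarith
  have main : ∀ r ∈ Set.Ico (0 : ℝ) c, g r > g c := by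
    intro r hr
    exact hanti ⟨hr.1, le_of_lt hr.2⟩ ⟨le_of_lt hcpos, le_refl c⟩ hr.2
  refine ⟨main, ?_⟩
  intro hmin
  have h1 := hmin (Set.mem_Ici.mpr (le_of_lt hcpos))
  have h2 := main 0 ⟨le_refl 0, hcpos⟩
  simp only [Set.mem_setOf_eq] at h1
  exact absurd h1 (not_le.mpr h2)
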